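/- Sine-coefficient equivariance error bound for the regular nonlinearity: for every δ with 0 ≤ δ ≤ 1 and every integer m ≥ 1, | (2/N) Σ_{t=0}^{N−1} sin(2π m t / N) · y(t + δ) − (2/N) Σ_{t=0}^{N−1} sin(2π m (t − δ) / N) · y(t) | ≤ (4π L_f / N) · ( ‖∂x‖₁ + m · ‖x‖₁ ). -/

import Mathlib

open Finset Real

lemma sin_lip' (a b : ℝ) : |Real.sin a - Real.sin b| ≤ |a - b| := by
  rw [Real.sin_sub_sin]
  calc |2 * Real.sin ((a - b) / 2) * Real.cos ((a + b) / 2)|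
      = 2 * |Real.sin ((a - b) / 2)| * |Real.cos ((a + b) / 2)| := by
        rw [abs_mul, abs_mul, abs_two]
    _ ≤ 2 * |(a - b) / 2| * 1 := by
        apply mul_le_mul _ (Real.abs_cos_le_one _) (abs_nonneg _) (by positivity)
        exact mul_le_mul_of_nonneg_left Real.abs_sin_le_abs (by norm_num)
    _ = |a - b| := by rw [abs_div, abs_two]; ring

lemma cos_lip' (a b : ℝ) : |Real.cos a - Real.cos b| ≤ |a - b| := by
  rw [Real.cos_sub_cos]
  calc |-2 * Real.sin ((a + b) / 2) * Real.sin ((a - b) / 2)|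
      = 2 * |Real.sin ((a + b) / 2)| * |Real.sin ((a - b) / 2)| := by
        rw [abs_mul, abs_mul]; norm_num
    _ ≤ 2 * 1 * |(a - b) / 2| := by
        apply mul_le_mul _ Real.abs_sin_le_abs (abs_nonneg _) (by norm_num)
        exact mul_le_mul_of_nonneg_left (Real.abs_sin_le_one _) (by norm_num)
    _ = |a - b| := by rw [abs_div, abs_two]; ring

/-- sin-coefficient equivariance error bound for the regular
nonlinearity. -/
theorem sine_coefficient_equivariance_error_bound
    (N B : ℕ) (hN : 1 ≤ N) (hB : 1 ≤ B)
    (x0 : ℝ) (xa xb : ℕ → ℝ) (x : ℝ → ℝ)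
    (hx : ∀ t : ℝ, x t = x0 + ∑ m ∈ Finset.Icc 1 B,
      (xa m * Real.cos (2 * Real.pi * m * t / N)
        + xb m * Real.sin (2 * Real.pi * m * t / N)))
    (f : ℝ → ℝ) (Lf : ℝ) (hLf : 0 ≤ Lf)
    (hf : ∀ a b : ℝ, |f a - f b| ≤ Lf * |a - b|) (hf0 : f 0 = 0)
    (y : ℝ → ℝ) (hy : ∀ t : ℝ, y t = f (x t)) :
    ∀ (δ : ℝ), 0 ≤ δ → δ ≤ 1 → ∀ m : ℕ, 1 ≤ m →
      |(2 / (N : ℝ)) * (∑ t ∈ Finset.range N,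
            Real.sin (2 * Real.pi * m * t / N) * y ((t : ℝ) + δ))
        - (2 / (N : ℝ)) * (∑ t ∈ Finset.range N,
            Real.sin (2 * Real.pi * m * ((t : ℝ) - δ) / N) * y t)|
      ≤ (4 * Real.pi * Lf / N) *
          ((∑ k ∈ Finset.Icc 1 B, (k : ℝ) * (|xa k| + |xb k|))
            + (m : ℝ) * (|x0| + ∑ k ∈ Finset.Icc 1 B, (|xa k| + |xb k|))) := by
  intro δ hδ0 hδ1 m hm
  have hNpos : (0 : ℝ) < N := by exact_mod_cast hN
  have hπ : (0 : ℝ) < Real.pi := Real.pi_pos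
  set D : ℝ := ∑ k ∈ Finset.Icc 1 B, (k : ℝ) * (|xa k| + |xb k|) with hD
  set S : ℝ := |x0| + ∑ k ∈ Finset.Icc 1 B, (|xa k| + |xb k|) with hS
  -- bound on |x t|
  have hxt : ∀ t : ℝ, |x t| ≤ S := by
    intro t
    rw [hx]
    refine (abs_add_le _ _).trans ?_
    rw [hS]
    gcongr
    refine (Finset.abs_sum_le_sum_abs _ _).trans ?_
    refine Finset.sum_le_sum fun k _ => ?_
    calc |xa k * Real.cos (2 * Real.pi * k * t / N) + xb k * Real.sin (2 * Real.pi * k * t / N)|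
        ≤ |xa k| * |Real.cos (2 * Real.pi * k * t / N)|
          + |xb k| * |Real.sin (2 * Real.pi * k * t / N)| := by
          refine (abs_add_le _ _).trans ?_
          rw [abs_mul, abs_mul]
      _ ≤ |xa k| * 1 + |xb k| * 1 :=
          add_le_add (mul_le_mul_of_nonneg_left (Real.abs_cos_le_one _) (abs_nonneg _))
            (mul_le_mul_of_nonneg_left (Real.abs_sin_le_one _) (abs_nonneg _))
      _ = |xa k| + |xb k| := by ring
  -- bound on |x (t+δ) - x t|
  have hxd : ∀ t : ℝ, |x (t + δ) - x t| ≤ 2 * Real.pi / N * D := by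
    intro t
    have hrw : x (t + δ) - x t = ∑ k ∈ Finset.Icc 1 B,
        (xa k * (Real.cos (2 * Real.pi * k * (t + δ) / N) - Real.cos (2 * Real.pi * k * t / N))
          + xb k * (Real.sin (2 * Real.pi * k * (t + δ) / N) - Real.sin (2 * Real.pi * k * t / N))) := by
      rw [hx, hx, add_sub_add_left_eq_sub, ← Finset.sum_sub_distrib]
      exact Finset.sum_congr rfl fun k _ => by ring
    rw [hrw]
    have step : ∀ k ∈ Finset.Icc 1 B,
        |xa k * (Real.cos (2 * Real.pi * k * (t + δ) / N) - Real.cos (2 * Real.pi * k * t / N))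
          + xb k * (Real.sin (2 * Real.pi * k * (t + δ) / N) - Real.sin (2 * Real.pi * k * t / N))|
        ≤ 2 * Real.pi / N * ((k : ℝ) * (|xa k| + |xb k|)) := by
      intro k _
      have harg : |2 * Real.pi * k * (t + δ) / N - 2 * Real.pi * k * t / N|
          ≤ 2 * Real.pi * k / N := by
        have : 2 * Real.pi * k * (t + δ) / N - 2 * Real.pi * k * t / N
            = 2 * Real.pi * k * δ / N := by ring
        rw [this, abs_of_nonneg (by positivity)]
        calc 2 * Real.pi * k * δ / N ≤ 2 * Real.pi * k * 1 / N := by gcongr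
          _ = 2 * Real.pi * k / N := by ring
      have hc := (cos_lip' (2 * Real.pi * k * (t + δ) / N) (2 * Real.pi * k * t / N)).trans harg
      have hs := (sin_lip' (2 * Real.pi * k * (t + δ) / N) (2 * Real.pi * k * t / N)).trans harg
      calc |xa k * _ + xb k * _|
          ≤ |xa k| * |Real.cos (2 * Real.pi * k * (t + δ) / N) - Real.cos (2 * Real.pi * k * t / N)|
            + |xb k| * |Real.sin (2 * Real.pi * k * (t + δ) / N) - Real.sin (2 * Real.pi * k * t / N)| := by
            refine (abs_add_le _ _).trans ?_
            rw [abs_mul, abs_mul]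
        _ ≤ |xa k| * (2 * Real.pi * k / N) + |xb k| * (2 * Real.pi * k / N) :=
            add_le_add (mul_le_mul_of_nonneg_left hc (abs_nonneg _))
              (mul_le_mul_of_nonneg_left hs (abs_nonneg _))
        _ = 2 * Real.pi / N * ((k : ℝ) * (|xa k| + |xb k|)) := by ring
    calc |∑ k ∈ Finset.Icc 1 B, _| ≤ ∑ k ∈ Finset.Icc 1 B, _ := Finset.abs_sum_le_sum_abs _ _
      _ ≤ ∑ k ∈ Finset.Icc 1 B, 2 * Real.pi / N * ((k : ℝ) * (|xa k| + |xb k|)) :=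
          Finset.sum_le_sum step
      _ = 2 * Real.pi / N * D := by rw [hD, Finset.mul_sum]
  -- bounds on y
  have hyL : ∀ s t : ℝ, |y s - y t| ≤ Lf * |x s - x t| := fun s t => by
    rw [hy, hy]; exact hf _ _
  have hyb : ∀ t : ℝ, |y t| ≤ Lf * S := by
    intro t
    have := hf (x t) 0
    rw [hf0, sub_zero, sub_zero] at this
    rw [hy]
    exact this.trans (by gcongr; exact hxt t)
  -- per-term bound
  have key : ∀ t ∈ Finset.range N,
      |Real.sin (2 * Real.pi * m * t / N) * y ((t : ℝ) + δ)
        - Real.sin (2 * Real.pi * m * ((t : ℝ) - δ) / N) * y t|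
      ≤ 2 * Real.pi * Lf / N * (D + m * S) := by
    intro t _
    set a := 2 * Real.pi * m * (t : ℝ) / N with ha
    set b := 2 * Real.pi * m * ((t : ℝ) - δ) / N with hb
    have hdec : Real.sin a * y ((t : ℝ) + δ) - Real.sin b * y t
        = Real.sin a * (y ((t : ℝ) + δ) - y t) + (Real.sin a - Real.sin b) * y t := by ring
    have harg : |a - b| ≤ 2 * Real.pi * m / N := by
      have : a - b = 2 * Real.pi * m * δ / N := by rw [ha, hb]; ring
      rw [this, abs_of_nonneg (by positivity)]
      calc 2 * Real.pi * m * δ / N ≤ 2 * Real.pi * m * 1 / N := by gcongr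
        _ = 2 * Real.pi * m / N := by ring
    have h1 : |y ((t : ℝ) + δ) - y t| ≤ Lf * (2 * Real.pi / N * D) :=
      (hyL _ _).trans (by gcongr; exact hxd t)
    have h2 : |Real.sin a - Real.sin b| ≤ 2 * Real.pi * m / N := (sin_lip' a b).trans harg
    calc |Real.sin a * y ((t : ℝ) + δ) - Real.sin b * y t|
        = |Real.sin a * (y ((t : ℝ) + δ) - y t) + (Real.sin a - Real.sin b) * y t| := by
          rw [hdec]
      _ ≤ |Real.sin a| * |y ((t : ℝ) + δ) - y t| + |Real.sin a - Real.sin b| * |y t| := by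
          refine (abs_add_le _ _).trans ?_
          rw [abs_mul, abs_mul]
      _ ≤ 1 * (Lf * (2 * Real.pi / N * D)) + (2 * Real.pi * m / N) * (Lf * S) :=
          add_le_add (mul_le_mul (Real.abs_sin_le_one a) h1 (abs_nonneg _) zero_le_one)
            (mul_le_mul h2 (hyb t) (abs_nonneg _) (by positivity))
      _ = 2 * Real.pi * Lf / N * (D + m * S) := by ring
  have hsum : |∑ t ∈ Finset.range N,
      (Real.sin (2 * Real.pi * m * t / N) * y ((t : ℝ) + δ)
        - Real.sin (2 * Real.pi * m * ((t : ℝ) - δ) / N) * y t)|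
      ≤ (N : ℝ) * (2 * Real.pi * Lf / N * (D + m * S)) := by
    calc _ ≤ ∑ t ∈ Finset.range N, |Real.sin (2 * Real.pi * m * t / N) * y ((t : ℝ) + δ)
          - Real.sin (2 * Real.pi * m * ((t : ℝ) - δ) / N) * y t| :=
        Finset.abs_sum_le_sum_abs _ _
      _ ≤ ∑ _t ∈ Finset.range N, 2 * Real.pi * Lf / N * (D + m * S) :=
        Finset.sum_le_sum key
      _ = (N : ℝ) * (2 * Real.pi * Lf / N * (D + m * S)) := by
        rw [Finset.sum_const, Finset.card_range]; push_cast; ring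
  have hfact : (2 / (N : ℝ)) * (∑ t ∈ Finset.range N,
        Real.sin (2 * Real.pi * m * t / N) * y ((t : ℝ) + δ))
      - (2 / (N : ℝ)) * (∑ t ∈ Finset.range N,
        Real.sin (2 * Real.pi * m * ((t : ℝ) - δ) / N) * y t)
      = (2 / (N : ℝ)) * ∑ t ∈ Finset.range N,
        (Real.sin (2 * Real.pi * m * t / N) * y ((t : ℝ) + δ)
          - Real.sin (2 * Real.pi * m * ((t : ℝ) - δ) / N) * y t) := by
    rw [← mul_sub, ← Finset.sum_sub_distrib]
  rw [hfact, abs_mul, abs_of_nonneg (by positivity : (0:ℝ) ≤ 2 / (N:ℝ))]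
  calc 2 / (N : ℝ) * |_| ≤ 2 / (N : ℝ) * ((N : ℝ) * (2 * Real.pi * Lf / N * (D + m * S))) :=
        mul_le_mul_of_nonneg_left hsum (by positivity)
    _ = 4 * Real.pi * Lf / N * (D + m * S) := by field_simp; ring
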